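/- For every coalition C ⊆ N, the average game of w^C lies in the span of the unanimity games γ_S for S ⊆ C: there exist real numbers (y_S)_{S⊆C} such that ŵ^C = Σ_{S⊆C} y_S γ_S as TU games on N. -/
import Mathlib


open Finset BigOperators

attribute [local instance] Classical.propDecidable

noncomputable section

variable {n j k : ℕ}

/-- The top element `j-1` of `Fin j`. -/
def topF (j : ℕ) [NeZero j] : Fin j :=
  ⟨j - 1, Nat.sub_lt (Nat.pos_of_ne_zero (NeZero.ne j)) one_pos⟩

/-- The profile equal to the constant `c` on `S` and to `x` off `S`. -/
def mer (S : Finset (Fin n)) (c : Fin j) (x : Fin n → Fin j) : Fin n → Fin j :=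
  fun i => if i ∈ S then c else x i

/-- `(j,k)` simple game: `v 0 = 0`, `v (j-1,…,j-1) = k-1`, monotone. -/
def IsJKGame [NeZero j] [NeZero k] (v : (Fin n → Fin j) → Fin k) : Prop :=
  v (fun _ => 0) = 0 ∧ v (fun _ => topF j) = topF k ∧
    ∀ x y : Fin n → Fin j, (∀ i, x i ≤ y i) → v x ≤ v y

/-- The `(j,k)` simple game with point-veto `a`. -/
def uA [NeZero j] [NeZero k] (a : Fin n → Fin j) (x : Fin n → Fin j) : Fin k :=
  if ∀ i, a i ≤ x i then topF k else 0

/-- The veto game associated with a set `E` of thresholds. -/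
def uE [NeZero j] [NeZero k] (E : Set (Fin n → Fin j)) (x : Fin n → Fin j) : Fin k :=
  if ∃ a ∈ E, ∀ i, a i ≤ x i then topF k else 0

/-- Player `i` is a null player of `v`. -/
def NullPlayer [NeZero j] [NeZero k] (v : (Fin n → Fin j) → Fin k) (i : Fin n) : Prop :=
  ∀ (x : Fin n → Fin j) (y : Fin j), v x = v (Function.update x i y)

/-- Players `i` and `h` are equivalent in `v`. -/
def EquivPlayers [NeZero j] [NeZero k] (v : (Fin n → Fin j) → Fin k) (i h : Fin n) : Prop :=
  ∀ x : Fin n → Fin j, v x = v (x ∘ Equiv.swap i h)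

/-- The average game `ṽ(T) = (1/(jⁿ(k-1))) Σ_x [v((j-1)_T, x_{-T}) - v(0_T, x_{-T})]`. -/
def Cfun [NeZero j] [NeZero k] (v : (Fin n → Fin j) → Fin k) (T : Finset (Fin n)) : ℝ :=
  (1 / ((j : ℝ) ^ n * ((k : ℝ) - 1))) *
    ∑ x : Fin n → Fin j,
      (((v (mer T (topF j) x)).val : ℝ) - ((v (mer T 0 x)).val : ℝ))

/-- The Shapley-Shubik index for `(j,k)` simple games. -/
def Phi [NeZero j] [NeZero k] (v : (Fin n → Fin j) → Fin k) (i : Fin n) : ℝ :=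
  ∑ S ∈ univ.filter (fun S : Finset (Fin n) => i ∈ S),
    ((Nat.factorial (S.card - 1) * Nat.factorial (n - S.card) : ℝ) / (Nat.factorial n : ℝ)) *
      (Cfun v S - Cfun v (S.erase i))

/-- The TU game `v_a(S) = (1/(k-1))[v((j-1)_S, a_{-S}) - v(0_S, a_{-S})]`. -/
def vAgame [NeZero j] [NeZero k] (v : (Fin n → Fin j) → Fin k) (a : Fin n → Fin j)
    (S : Finset (Fin n)) : ℝ :=
  (1 / ((k : ℝ) - 1)) * (((v (mer S (topF j) a)).val : ℝ) - ((v (mer S 0 a)).val : ℝ))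

/-- The parametric power index `Φ^a`. -/
def PhiA [NeZero j] [NeZero k] (v : (Fin n → Fin j) → Fin k) (a : Fin n → Fin j) (i : Fin n) : ℝ :=
  ∑ S ∈ univ.filter (fun S : Finset (Fin n) => i ∈ S),
    ((Nat.factorial (S.card - 1) * Nat.factorial (n - S.card) : ℝ) / (Nat.factorial n : ℝ)) *
      (vAgame v a S - vAgame v a (S.erase i))

/-- The game `w^C`: value `k-1` iff all members of `C` give full support. -/
def wCgame [NeZero j] [NeZero k] (C : Finset (Fin n)) : (Fin n → Fin j) → Fin k :=
  uA (fun i => if i ∈ C then topF j else 0)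

/-- The unanimity TU game `γ_S`. -/
def gammaTU (S T : Finset (Fin n)) : ℝ :=
  if S ⊆ T then 1 else 0

end


section AuxLemmas

lemma mobius_inner {α : Type*} [DecidableEq α] (A R : Finset α) (hR : R ⊆ A) :
    ∑ S ∈ A.powerset.filter (fun S => R ⊆ S), (-1:ℝ)^(S.card - R.card) =
      if R = A then 1 else 0 := by
  classical
  have key : ∑ S ∈ A.powerset.filter (fun S => R ⊆ S), (-1:ℝ)^(S.card - R.card)
      = ∑ U ∈ (A \ R).powerset, (-1:ℝ)^U.card := by
    refine Finset.sum_bij' (fun S _ => S \ R) (fun U _ => U ∪ R) ?_ ?_ ?_ ?_ ?_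
    · intro S hS
      simp only [mem_filter, mem_powerset] at hS ⊢
      exact sdiff_subset_sdiff hS.1 (le_refl R)
    · intro U hU
      simp only [mem_powerset] at hU
      simp only [mem_filter, mem_powerset]
      exact ⟨union_subset (hU.trans (sdiff_subset)) hR, subset_union_right⟩
    · intro S hS
      simp only [mem_filter, mem_powerset] at hS
      exact sdiff_union_of_subset hS.2
    · intro U hU
      simp only [mem_powerset] at hU
      exact union_sdiff_cancel_right (disjoint_of_subset_left hU sdiff_disjoint)
    · intro S hS
      simp only [mem_filter, mem_powerset] at hS
      congr 1
      rw [card_sdiff_of_subset hS.2]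
  have h2 : ∑ U ∈ (A \ R).powerset, (-1:ℝ)^U.card = if A \ R = ∅ then 1 else 0 := by
    exact_mod_cast congrArg (Int.cast : ℤ → ℝ) (Finset.sum_powerset_neg_one_pow_card (x := A \ R))
  rw [key, h2]
  congr 1
  simp only [sdiff_eq_empty_iff_subset, eq_iff_iff]
  constructor
  · intro h; exact Finset.Subset.antisymm hR h
  · intro h; rw [h]

lemma mobius_sum {α : Type*} [DecidableEq α] (g : Finset α → ℝ) (A : Finset α) :
    ∑ S ∈ A.powerset, ∑ R ∈ S.powerset, (-1:ℝ)^(S.card - R.card) * g R = g A := by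
  classical
  have step1 : ∀ S ∈ A.powerset,
      ∑ R ∈ S.powerset, (-1:ℝ)^(S.card - R.card) * g R =
        ∑ R ∈ A.powerset, if R ⊆ S then (-1:ℝ)^(S.card - R.card) * g R else 0 := by
    intro S hS
    rw [mem_powerset] at hS
    rw [← Finset.sum_filter]
    congr 1
    ext R
    simp only [mem_filter, mem_powerset]
    exact ⟨fun h => ⟨h.trans hS, h⟩, fun h => h.2⟩
  rw [Finset.sum_congr rfl step1, Finset.sum_comm]
  have step2 : ∀ R ∈ A.powerset,
      ∑ S ∈ A.powerset, (if R ⊆ S then (-1:ℝ)^(S.card - R.card) * g R else 0) =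
        (if R = A then 1 else 0) * g R := by
    intro R hR
    rw [mem_powerset] at hR
    rw [← Finset.sum_filter, ← Finset.sum_mul, mobius_inner A R hR]
  rw [Finset.sum_congr rfl step2]
  simp [Finset.sum_ite_eq' A.powerset A]


lemma wC_mer {n j k : ℕ} [NeZero j] [NeZero k] (C T : Finset (Fin n)) (c : Fin j)
    (x : Fin n → Fin j) :
    (wCgame C (mer T c x) : Fin k) = wCgame C (mer (C ∩ T) c x) := by
  unfold wCgame uA
  refine if_congr ⟨fun h i => ?_, fun h i => ?_⟩ rfl rfl
  · have hi := h i
    by_cases hC : i ∈ C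
    · simpa [mer, hC, Finset.mem_inter] using hi
    · simpa [hC] using hi
  · have hi := h i
    by_cases hC : i ∈ C
    · simpa [mer, hC, Finset.mem_inter] using hi
    · simpa [hC] using hi

lemma Cfun_wC {n j k : ℕ} [NeZero j] [NeZero k] (C T : Finset (Fin n)) :
    Cfun (wCgame C : (Fin n → Fin j) → Fin k) T =
      Cfun (wCgame C : (Fin n → Fin j) → Fin k) (C ∩ T) := by
  unfold Cfun
  congr 1
  refine Finset.sum_congr rfl fun x _ => ?_
  rw [wC_mer C T (topF j) x, wC_mer C T 0 x]

end AuxLemmas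

theorem stmt15 {n j k : ℕ} [NeZero j] [NeZero k] (hj : 2 ≤ j) (hk : 2 ≤ k)
    (C : Finset (Fin n)) :
    ∃ y : Finset (Fin n) → ℝ,
      ∀ T : Finset (Fin n),
        Cfun (wCgame C : (Fin n → Fin j) → Fin k) T =
          ∑ S ∈ C.powerset, y S * gammaTU S T := by
  classical
  refine ⟨fun S => ∑ R ∈ S.powerset,
    (-1:ℝ)^(S.card - R.card) * Cfun (wCgame C : (Fin n → Fin j) → Fin k) R, fun T => ?_⟩
  rw [Cfun_wC C T,
    ← mobius_sum (fun R => Cfun (wCgame C : (Fin n → Fin j) → Fin k) R) (C ∩ T)]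
  have hfil : (C ∩ T).powerset = C.powerset.filter (fun S => S ⊆ T) := by
    ext S
    simp only [Finset.mem_powerset, Finset.mem_filter, Finset.subset_inter_iff]
  rw [hfil, Finset.sum_filter]
  refine Finset.sum_congr rfl fun S _ => ?_
  simp [gammaTU, mul_ite]
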